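/- If a nonempty set Ω ⊆ ℝ² is strictly separated from the origin, then its antipolar Ω^◇ satisfies property (i) (it is nonempty, convex, closed, does not contain the origin, and λΩ^◇ ⊆ Ω^◇ for every λ > 1), and moreover Ω^{◇◇} = closure(convexHull(⋃_{λ ≥ 1} λΩ)). -/

import Mathlib

open scoped Pointwise

/-- The antipolar of a set `Ω ⊆ ℝ²`:
`Ω^◇ = {(p,q) : p·x − q·y ≥ 1 for all (x,y) ∈ Ω}`. -/
def antipolar (Ω : Set (ℝ × ℝ)) : Set (ℝ × ℝ) :=
  {pq | ∀ xy ∈ Ω, 1 ≤ pq.1 * xy.1 - pq.2 * xy.2}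

/-- Property (i): `Ω` is nonempty, convex, closed, does not contain the origin,
and has the ray property `λΩ ⊆ Ω` for every `λ > 1`. -/
def PropI (Ω : Set (ℝ × ℝ)) : Prop :=
  Ω.Nonempty ∧ Convex ℝ Ω ∧ IsClosed Ω ∧ (0 : ℝ × ℝ) ∉ Ω ∧
    ∀ c : ℝ, 1 < c → c • Ω ⊆ Ω

/-- `Ω` is strictly separated from the origin if there are `A, B ∈ ℝ`
with `A·x + B·y ≥ 1` for all `(x,y) ∈ Ω`. -/
def StrictlySeparatedFromOrigin (Ω : Set (ℝ × ℝ)) : Prop :=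
  ∃ A B : ℝ, ∀ xy ∈ Ω, 1 ≤ A * xy.1 + B * xy.2

lemma antipolar_convex (Ω : Set (ℝ × ℝ)) : Convex ℝ (antipolar Ω) := by
  intro z hz w hw a b ha hb hab xy hxy
  have h1 := hz xy hxy
  have h2 := hw xy hxy
  have key : (a • z + b • w).1 * xy.1 - (a • z + b • w).2 * xy.2
      = a * (z.1 * xy.1 - z.2 * xy.2) + b * (w.1 * xy.1 - w.2 * xy.2) := by
    simp [Prod.smul_fst, Prod.smul_snd, smul_eq_mul]
    ring
  rw [key]
  nlinarith

lemma antipolar_closed (Ω : Set (ℝ × ℝ)) : IsClosed (antipolar Ω) := by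
  have h : antipolar Ω = ⋂ xy ∈ Ω, {pq : ℝ × ℝ | 1 ≤ pq.1 * xy.1 - pq.2 * xy.2} := by
    ext pq; simp [antipolar]
  rw [h]
  exact isClosed_biInter fun xy _ => isClosed_le continuous_const (by fun_prop)

lemma clm_repr (f : ℝ × ℝ →L[ℝ] ℝ) (v : ℝ × ℝ) :
    f v = v.1 * f (1, 0) + v.2 * f (0, 1) := by
  have h : v = v.1 • ((1 : ℝ), (0 : ℝ)) + v.2 • ((0 : ℝ), (1 : ℝ)) := by
    simp [Prod.smul_def, smul_eq_mul, Prod.ext_iff]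
  calc f v = f (v.1 • ((1 : ℝ), (0 : ℝ)) + v.2 • ((0 : ℝ), (1 : ℝ))) := by rw [← h]
    _ = v.1 * f (1, 0) + v.2 * f (0, 1) := by
        rw [map_add, map_smul, map_smul, smul_eq_mul, smul_eq_mul]

/-- If a nonempty `Ω ⊆ ℝ²` is strictly separated from the origin, then `Ω^◇`
satisfies property (i), and `Ω^{◇◇} = closure(convexHull(⋃_{λ ≥ 1} λΩ))`. -/
theorem antipolar_of_strictlySeparated
    (Ω : Set (ℝ × ℝ)) (hne : Ω.Nonempty)
    (hsep : StrictlySeparatedFromOrigin Ω) :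
    PropI (antipolar Ω) ∧
      antipolar (antipolar Ω) =
        closure (convexHull ℝ (⋃ c ∈ Set.Ici (1 : ℝ), c • Ω)) := by
  obtain ⟨A, B, hAB⟩ := hsep
  obtain ⟨x₀, hx₀⟩ := hne
  have hABmem : ((A, -B) : ℝ × ℝ) ∈ antipolar Ω := by
    intro xy hxy
    have := hAB xy hxy
    simp only []
    nlinarith
  set S : Set (ℝ × ℝ) := ⋃ c ∈ Set.Ici (1 : ℝ), c • Ω with hS
  have hΩS : ∀ x ∈ Ω, ∀ t : ℝ, 1 ≤ t → t • x ∈ S := by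
    intro x hx t ht
    exact Set.mem_biUnion ht (Set.smul_mem_smul_set hx)
  have hSK : S ⊆ closure (convexHull ℝ S) :=
    (subset_convexHull ℝ S).trans subset_closure
  constructor
  · refine ⟨⟨(A, -B), hABmem⟩, antipolar_convex Ω, antipolar_closed Ω, ?_, ?_⟩
    · intro h0
      have := h0 x₀ hx₀
      simp at this
      linarith
    · intro c hc w hw
      obtain ⟨v, hv, rfl⟩ := hw
      intro xy hxy
      have := hv xy hxy
      have key : (c • v).1 * xy.1 - (c • v).2 * xy.2
          = c * (v.1 * xy.1 - v.2 * xy.2) := by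
        simp [Prod.smul_fst, Prod.smul_snd, smul_eq_mul]; ring
      rw [key]; nlinarith
  · apply Set.Subset.antisymm
    · -- hard direction: Ω^◇◇ ⊆ closure (convexHull S)
      intro z hzD
      by_contra hz
      obtain ⟨f, u, hfz, hfK⟩ :=
        geometric_hahn_banach_point_closed
          ((convex_convexHull ℝ S).closure) isClosed_closure hz
      have hfΩu : ∀ x ∈ Ω, u < f x := by
        intro x hx
        have := hfK _ (hSK (hΩS x hx 1 le_rfl))
        simpa using this
      have hfpos : ∀ x ∈ Ω, 0 ≤ f x := by
        intro x hx
        by_contra hneg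
        push_neg at hneg
        set t : ℝ := max 1 ((|u| + 1) / (-f x)) with ht
        have ht1 : 1 ≤ t := le_max_left _ _
        have hfx : 0 < -f x := by linarith
        have h2 : (|u| + 1) / (-f x) ≤ t := le_max_right _ _
        have h3 : |u| + 1 ≤ t * (-f x) := (div_le_iff₀ hfx).mp h2
        have h4 := hfK _ (hSK (hΩS x hx t ht1))
        rw [map_smul, smul_eq_mul] at h4
        have := neg_abs_le u
        nlinarith
      set p : ℝ := f (1, 0) with hp
      set q : ℝ := f (0, 1) with hq
      have hrepr : ∀ v : ℝ × ℝ, f v = v.1 * p + v.2 * q := fun v => clm_repr f v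
      by_cases hz0 : f z < 0
      · set c : ℝ := A * z.1 + B * z.2 with hc
        have hfzne : -f z ≠ 0 := by linarith
        set s : ℝ := (|c| + 1) / (-f z) with hs
        have hs0 : 0 ≤ s := div_nonneg (by positivity) (by linarith)
        have hsfz : s * f z = -(|c| + 1) := by
          rw [hs, div_mul_eq_mul_div, div_eq_iff hfzne]; ring
        set w : ℝ × ℝ := (s * p + A, -(s * q) - B) with hw
        have hwmem : w ∈ antipolar Ω := by
          intro x hx
          have h1 := hfpos x hx
          have h2 := hAB x hx
          have h3 := hrepr x
          have hexp : w.1 * x.1 - w.2 * x.2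
              = s * (x.1 * p + x.2 * q) + (A * x.1 + B * x.2) := by
            simp only [hw]; ring
          rw [hexp, ← h3]
          nlinarith [mul_nonneg hs0 h1]
        have hzw := hzD w hwmem
        have hexp : z.1 * w.1 - z.2 * w.2
            = s * (z.1 * p + z.2 * q) + (A * z.1 + B * z.2) := by
          simp only [hw]; ring
        rw [hexp, ← hrepr z] at hzw
        have := le_abs_self c
        rw [← hc] at hzw
        linarith [hsfz]
      · push_neg at hz0
        have hu : 0 < u := lt_of_le_of_lt hz0 hfz
        set w : ℝ × ℝ := (p / u, -(q / u)) with hw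
        have hwmem : w ∈ antipolar Ω := by
          intro x hx
          have h1 := hfΩu x hx
          have h3 := hrepr x
          have hexp : w.1 * x.1 - w.2 * x.2 = (x.1 * p + x.2 * q) / u := by
            simp only [hw]; ring
          rw [hexp, ← h3]
          rw [le_div_iff₀ hu]
          linarith
        have hzw := hzD w hwmem
        have hexp : z.1 * w.1 - z.2 * w.2 = (z.1 * p + z.2 * q) / u := by
          simp only [hw]; ring
        rw [hexp, ← hrepr z, le_div_iff₀ hu] at hzw
        linarith
    · -- easy direction
      apply closure_minimal
      apply convexHull_min _ (antipolar_convex (antipolar Ω))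
      · intro z hz
        rw [Set.mem_iUnion₂] at hz
        obtain ⟨c, hc, hzc⟩ := hz
        obtain ⟨x, hx, rfl⟩ := hzc
        intro w hw
        have h1 := hw x hx
        have hc1 : (1 : ℝ) ≤ c := hc
        have key : (c • x).1 * w.1 - (c • x).2 * w.2
            = c * (w.1 * x.1 - w.2 * x.2) := by
          simp [Prod.smul_fst, Prod.smul_snd, smul_eq_mul]; ring
        rw [key]; nlinarith
      · exact antipolar_closed (antipolar Ω)
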